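/- Let σ be a positive semidefinite matrix with spectral decomposition σ = ∑_i s_i E_i into v distinct eigenvalues, and let E_σ(ρ) = ∑_i E_i ρ E_i be the pinching map. Then for any positive semidefinite ρ, ρ ≤ v · E_σ(ρ) in the Loewner order. -/

import Mathlib

open Matrix
open scoped ComplexOrder

lemma smul_posSemidef_aux {n : ℕ} {M : Matrix (Fin n) (Fin n) ℂ} (h : M.PosSemidef)
    {c : ℝ} (hc : 0 ≤ c) : ((c : ℂ) • M).PosSemidef := by
  constructor
  · show ((c : ℂ) • M)ᴴ = _
    rw [conjTranspose_smul, h.1.eq]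
    congr 1
    simp [Complex.star_def, Complex.conj_ofReal]
  · intro x
    exact (h.smul (show (0:ℂ) ≤ (c:ℂ) by exact_mod_cast hc)).2 x

lemma sum_posSemidef_aux {n : ℕ} {ι : Type*} (s : Finset ι)
    (f : ι → Matrix (Fin n) (Fin n) ℂ) (h : ∀ i ∈ s, (f i).PosSemidef) :
    (∑ i ∈ s, f i).PosSemidef :=
  Finset.sum_induction f _ (fun _ _ ha hb => ha.add hb) Matrix.PosSemidef.zero h

/-- Pinching inequality: if `σ = ∑ i, s i • E i` is the spectral decomposition of a positive
semidefinite matrix into `v` distinct eigenvalues with mutually orthogonal spectral projections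
`E i`, then `ρ ≤ v • ∑ i, E i * ρ * E i` in the Loewner order for any positive semidefinite ρ. -/
theorem pinching_inequality {d v : ℕ} (σ ρ : Matrix (Fin d) (Fin d) ℂ)
    (s : Fin v → ℝ) (E : Fin v → Matrix (Fin d) (Fin d) ℂ)
    (hEh : ∀ i, (E i).IsHermitian)
    (hEidem : ∀ i, E i * E i = E i)
    (hEorth : ∀ i j, i ≠ j → E i * E j = 0)
    (hEsum : ∑ i, E i = 1)
    (hs : Function.Injective s)
    (hσ : σ = ∑ i, (s i : ℂ) • E i)
    (hσpsd : σ.PosSemidef)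
    (hρ : ρ.PosSemidef) :
    ((v : ℂ) • (∑ i, E i * ρ * E i) - ρ).PosSemidef := by
  have hS : ∀ i j, ((E i - E j) * ρ * (E i - E j)).PosSemidef := by
    intro i j
    have := hρ.mul_mul_conjTranspose_same (E i - E j)
    rwa [conjTranspose_sub, (hEh i).eq, (hEh j).eq] at this
  have hSsum : (∑ i, ∑ j, (E i - E j) * ρ * (E i - E j)).PosSemidef :=
    sum_posSemidef_aux _ _ fun i _ => sum_posSemidef_aux _ _ fun j _ => hS i j
  have key : (2 : ℂ) • ((v : ℂ) • (∑ i, E i * ρ * E i) - ρ)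
      = ∑ i, ∑ j, (E i - E j) * ρ * (E i - E j) := by
    have h1 : ∑ i, ∑ j, (E i - E j) * ρ * (E i - E j)
        = ∑ i : Fin v, ∑ j : Fin v,
          (E i * ρ * E i - E i * ρ * E j - E j * ρ * E i + E j * ρ * E j) := by
      refine Finset.sum_congr rfl fun i _ => Finset.sum_congr rfl fun j _ => ?_
      noncomm_ring
    rw [h1]
    have h2 : ∀ i : Fin v, ∑ j : Fin v, E i * ρ * E j = E i * ρ := by
      intro i
      rw [← Finset.mul_sum, hEsum, mul_one]
    have h3 : ∀ i : Fin v, ∑ j : Fin v, E j * ρ * E i = ρ * E i := by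
      intro i
      simp_rw [mul_assoc]
      rw [← Finset.sum_mul, hEsum, one_mul]
    simp_rw [Finset.sum_add_distrib, Finset.sum_sub_distrib, h2, h3,
      Finset.sum_const, Finset.card_univ, Fintype.card_fin]
    rw [← Finset.sum_mul, ← Finset.mul_sum, hEsum, one_mul, mul_one]
    rw [Nat.cast_smul_eq_nsmul (R := ℂ) v, ← Finset.smul_sum,
      show (2:ℂ) = ((2:ℕ):ℂ) by norm_num, Nat.cast_smul_eq_nsmul (R := ℂ) 2]
    abel
  have htarget : ((v : ℂ) • (∑ i, E i * ρ * E i) - ρ)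
      = (((1/2 : ℝ)) : ℂ) • (∑ i, ∑ j, (E i - E j) * ρ * (E i - E j)) := by
    rw [← key, smul_smul]
    norm_num
  rw [htarget]
  exact smul_posSemidef_aux hSsum (by norm_num)
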